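/- Let K, k, z be positive integers with K - k*z even and K - k*z ≥ 2. Then 2 * ∑_{r = (K-k*z)/2 + 1}^{K-k*z} 1/(1 + ⌈k*z/r⌉) ≤ (K - k*z)^2 / K. -/

import Mathlib

theorem stmt_0 (K k z : ℕ) (hK : 0 < K) (hk : 0 < k) (hz : 0 < z)
    (hlt : k * z < K) (heven : Even (K - k * z)) (h2 : 2 ≤ K - k * z) :
    2 * ∑ r ∈ Finset.Icc ((K - k * z) / 2 + 1) (K - k * z),
        (1 : ℚ) / (1 + (⌈(k * z : ℚ) / (r : ℚ)⌉ : ℚ))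
      ≤ ((K - k * z : ℕ) : ℚ) ^ 2 / (K : ℚ) := by
  rw [show ((k : ℚ) * (z : ℚ)) = ((k * z : ℕ) : ℚ) by push_cast; ring]
  set c := k * z with hc
  set m := K - c with hm
  obtain ⟨t, ht⟩ := heven
  have hc1 : 1 ≤ c := Nat.one_le_iff_ne_zero.mpr (Nat.mul_ne_zero hk.ne' hz.ne')
  have hKeq : K = m + c := by omega
  have hbound : ∀ r ∈ Finset.Icc (m / 2 + 1) m,
      (1 : ℚ) / (1 + (⌈(c : ℚ) / (r : ℚ)⌉ : ℚ)) ≤ (m : ℚ) / (K : ℚ) := by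
    intro r hr
    simp only [Finset.mem_Icc] at hr
    have hr1 : 1 ≤ r := by omega
    have hrm : r ≤ m := hr.2
    have hrQ : (0 : ℚ) < (r : ℚ) := by exact_mod_cast hr1
    have hcQ : (0 : ℚ) < (c : ℚ) := by exact_mod_cast hc1
    have hceil : (c : ℚ) / (r : ℚ) ≤ (⌈(c : ℚ) / (r : ℚ)⌉ : ℚ) := Int.le_ceil _
    have hdpos : (0 : ℚ) < 1 + (c : ℚ) / (r : ℚ) := by positivity
    have h1 : (1 : ℚ) / (1 + (⌈(c : ℚ) / (r : ℚ)⌉ : ℚ)) ≤ 1 / (1 + (c : ℚ) / (r : ℚ)) := by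
      apply one_div_le_one_div_of_le hdpos
      linarith
    have h2' : (1 : ℚ) / (1 + (c : ℚ) / (r : ℚ)) = (r : ℚ) / ((r : ℚ) + (c : ℚ)) := by
      field_simp
    have h3 : (r : ℚ) / ((r : ℚ) + (c : ℚ)) ≤ (m : ℚ) / (K : ℚ) := by
      have hmQ : ((m : ℚ)) ≤ ((K : ℚ)) := by exact_mod_cast (by omega : m ≤ K)
      have hKQ : (0 : ℚ) < (K : ℚ) := by exact_mod_cast hK
      rw [div_le_div_iff₀ (by positivity) hKQ]
      have hKQ' : (K : ℚ) = (m : ℚ) + (c : ℚ) := by exact_mod_cast hKeq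
      have hrmQ : (r : ℚ) ≤ (m : ℚ) := by exact_mod_cast hrm
      nlinarith
    calc (1 : ℚ) / (1 + (⌈(c : ℚ) / (r : ℚ)⌉ : ℚ)) ≤ 1 / (1 + (c : ℚ) / (r : ℚ)) := h1
      _ = (r : ℚ) / ((r : ℚ) + (c : ℚ)) := h2'
      _ ≤ (m : ℚ) / (K : ℚ) := h3
  have hsum : ∑ r ∈ Finset.Icc (m / 2 + 1) m,
      (1 : ℚ) / (1 + (⌈(c : ℚ) / (r : ℚ)⌉ : ℚ)) ≤ ((m / 2 : ℕ) : ℚ) * ((m : ℚ) / (K : ℚ)) := by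
    calc ∑ r ∈ Finset.Icc (m / 2 + 1) m, (1 : ℚ) / (1 + (⌈(c : ℚ) / (r : ℚ)⌉ : ℚ))
        ≤ ∑ r ∈ Finset.Icc (m / 2 + 1) m, (m : ℚ) / (K : ℚ) := Finset.sum_le_sum hbound
      _ = ((Finset.Icc (m / 2 + 1) m).card : ℚ) * ((m : ℚ) / (K : ℚ)) := by
          rw [Finset.sum_const, nsmul_eq_mul]
      _ = ((m / 2 : ℕ) : ℚ) * ((m : ℚ) / (K : ℚ)) := by
          congr 2
          rw [Nat.card_Icc]
          omega
  have hm2 : ((m / 2 : ℕ) : ℚ) * 2 = (m : ℚ) := by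
    have : m / 2 * 2 = m := by omega
    exact_mod_cast this
  have hKQ : (0 : ℚ) < (K : ℚ) := by exact_mod_cast hK
  calc 2 * ∑ r ∈ Finset.Icc (m / 2 + 1) m, (1 : ℚ) / (1 + (⌈(c : ℚ) / (r : ℚ)⌉ : ℚ))
      ≤ 2 * (((m / 2 : ℕ) : ℚ) * ((m : ℚ) / (K : ℚ))) := by linarith
    _ = ((m : ℕ) : ℚ) ^ 2 / (K : ℚ) := by
        rw [← hm2]; field_simp
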